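/- With recursion-free global and local types and projection `project` as above: if `r` is not a participant of `G` (`r ∉ prts G`) and `project G r = some L`, then `L = end`. -/
import Mathlib

open scoped Classical

/-- Recursion-free local session types: `lend`, send to a partner, or receive
from a partner, with a list of `(label, sort, continuation)` branches.
Participants, labels and sorts are drawn from `ℕ`. -/
inductive LType : Type
  | lend : LType
  | lsend : ℕ → List (ℕ × ℕ × LType) → LType
  | lrecv : ℕ → List (ℕ × ℕ × LType) → LType

/-- Recursion-free global session types. -/
inductive GT : Type
  | gend : GT
  | gmsg : ℕ → ℕ → List (ℕ × ℕ × GT) → GT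

mutual
/-- Participants of a recursion-free global type. -/
def prts : GT → Set ℕ
  | .gend => ∅
  | .gmsg p q cs => {p, q} ∪ prtsList cs

def prtsList : List (ℕ × ℕ × GT) → Set ℕ
  | [] => ∅
  | c :: cs => prts c.2.2 ∪ prtsList cs
end

mutual
/-- Partial projection of a recursion-free global type onto a participant. -/
noncomputable def project : GT → ℕ → Option LType
  | .gend, _ => some .lend
  | .gmsg p q cs, r =>
    if r = p then (projectList cs r).map (.lsend q)
    else if r = q then (projectList cs r).map (.lrecv p)
    else projectSame cs r

/-- Project every continuation, failing if any projection fails. -/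
noncomputable def projectList : List (ℕ × ℕ × GT) → ℕ → Option (List (ℕ × ℕ × LType))
  | [], _ => some []
  | c :: cs, r =>
    match project c.2.2 r, projectList cs r with
    | some L, some rest => some ((c.1, c.2.1, L) :: rest)
    | _, _ => none

/-- Project all continuations, defined only when all projections are defined
and equal, in which case it returns the common value. -/
noncomputable def projectSame : List (ℕ × ℕ × GT) → ℕ → Option LType
  | [], _ => none
  | [c], r => project c.2.2 r
  | c :: cs, r =>
    match project c.2.2 r, projectSame cs r with
    | some L, some L' => if L = L' then some L else none
    | _, _ => none
end

mutual
theorem aux1 : ∀ (G : GT) (r : ℕ) (L : LType),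
    r ∉ prts G → project G r = some L → L = .lend
  | .gend, r, L, _, h => by
    simp [project] at h; exact h.symm
  | .gmsg p q cs, r, L, hr, h => by
    have hcs : r ∉ prtsList cs := fun hm => hr (by rw [prts]; exact Or.inr hm)
    have hp : r ≠ p := fun e => hr (by rw [prts]; exact Or.inl (by simp [e]))
    have hq : r ≠ q := fun e => hr (by rw [prts]; exact Or.inl (by simp [e]))
    rw [project, if_neg hp, if_neg hq] at h
    exact aux2 cs r L hcs h
theorem aux2 : ∀ (cs : List (ℕ × ℕ × GT)) (r : ℕ) (L : LType),
    r ∉ prtsList cs → projectSame cs r = some L → L = .lend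
  | [], r, L, _, h => by simp [projectSame] at h
  | [c], r, L, hr, h => by
    rw [projectSame] at h
    have : r ∉ prts c.2.2 := fun hm => hr (by rw [prtsList]; exact Or.inl hm)
    exact aux1 c.2.2 r L this h
  | c :: c' :: cs, r, L, hr, h => by
    rw [projectSame] at h
    case x_2 => simp
    have h1 : r ∉ prts c.2.2 := fun hm => hr (by rw [prtsList]; exact Or.inl hm)
    have h2 : r ∉ prtsList (c' :: cs) := fun hm => hr (by rw [prtsList]; exact Or.inr hm)
    cases hp : project c.2.2 r with
    | none => rw [hp] at h; simp at h
    | some L1 =>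
      cases hps : projectSame (c' :: cs) r with
      | none => rw [hp, hps] at h; simp at h
      | some L2 =>
        rw [hp, hps] at h
        by_cases he : L1 = L2
        · simp only [he, if_true] at h
          injection h with h
          exact h ▸ aux1 c.2.2 r L2 h1 (he ▸ hp)
        · simp [he] at h
end

theorem project_not_part (G : GT) (r : ℕ) (L : LType)
    (hr : r ∉ prts G) (h : project G r = some L) : L = .lend :=
  aux1 G r L hr h
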